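/- Under the hypotheses of the previous estimate, if additionally |f'(x)| < 1/10 and |g'(x) - 1| < 1/10 on [0, ℓ₁], then ∫₀^{ℓ₁} |h|² + ∫₀^{ℓ₁} |h'|² ≥ (59 ℓ₁/100)(|a|² + |b|²), where h = a f + b g. -/

import Mathlib

lemma key_real (p q p' q' u v : ℝ)
    (h1 : |p - 1| ≤ 1/10) (h2 : |q| ≤ 1/10) (h3 : |p'| ≤ 1/10) (h4 : |q' - 1| ≤ 1/10) :
    59/100 * (u^2 + v^2) ≤ (u*p + v*q)^2 + (u*p' + v*q')^2 := by
  rw [abs_le] at h1 h2 h3 h4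
  have hγ : |p*q + p'*q'| ≤ 22/100 := by
    have := abs_add_le (p*q) (p'*q')
    rw [abs_mul, abs_mul] at this
    have hp : |p| ≤ 11/10 := abs_le.2 ⟨by linarith [h1.1], by linarith [h1.2]⟩
    have hq' : |q'| ≤ 11/10 := abs_le.2 ⟨by linarith [h4.1], by linarith [h4.2]⟩
    nlinarith [abs_nonneg p, abs_nonneg q, abs_nonneg p', abs_nonneg q', h2.2, h3.2,
      abs_nonneg (p*q), abs_nonneg (p'*q'), h2.1, h3.1, abs_le.2 h2, abs_le.2 h3]
  have h2uv : 2*|u*v| ≤ u^2 + v^2 := by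
    rw [abs_mul]
    nlinarith [sq_nonneg (|u| - |v|), sq_abs u, sq_abs v]
  have habs : |p*q + p'*q'| * (2*|u*v|) ≤ 22/100 * (u^2+v^2) :=
    mul_le_mul hγ h2uv (by positivity) (by norm_num)
  have hle : -(22/100 * (u^2+v^2)) ≤ 2*((p*q+p'*q')*(u*v)) := by
    have h5 := neg_abs_le ((p*q+p'*q')*(u*v))
    have h6 := abs_mul (p*q+p'*q') (u*v)
    nlinarith [abs_nonneg (u*v), abs_nonneg (p*q+p'*q')]
  have hp2 : 81/100 ≤ p^2 := by nlinarith [h1.1, h1.2]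
  have hq'2 : 81/100 ≤ q'^2 := by nlinarith [h4.1, h4.2]
  nlinarith [hle, sq_nonneg u, sq_nonneg v, sq_nonneg q, sq_nonneg p',
    mul_le_mul_of_nonneg_right hp2 (sq_nonneg u), mul_le_mul_of_nonneg_right hq'2 (sq_nonneg v)]

lemma key_cplx (a b : ℂ) (p q p' q' : ℝ)
    (h1 : |p - 1| ≤ 1/10) (h2 : |q| ≤ 1/10) (h3 : |p'| ≤ 1/10) (h4 : |q' - 1| ≤ 1/10) :
    59/100 * (‖a‖^2 + ‖b‖^2) ≤ ‖a*(p:ℂ) + b*(q:ℂ)‖^2 + ‖a*(p':ℂ) + b*(q':ℂ)‖^2 := by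
  have e : ∀ z : ℂ, ‖z‖^2 = z.re^2 + z.im^2 := by
    intro z
    rw [Complex.sq_norm, Complex.normSq_apply]; ring
  simp only [e, Complex.add_re, Complex.add_im, Complex.mul_re, Complex.mul_im,
    Complex.ofReal_re, Complex.ofReal_im]
  have hre := key_real p q p' q' a.re b.re h1 h2 h3 h4
  have him := key_real p q p' q' a.im b.im h1 h2 h3 h4
  ring_nf
  ring_nf at hre him
  linarith

theorem sobolev_lower_bound_on_edge (ℓ₁ : ℝ) (hℓ : 0 < ℓ₁) (f g : ℝ → ℝ)
    (hf : ContDiff ℝ 1 f) (hg : ContDiff ℝ 1 g)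
    (hfb : ∀ x ∈ Set.Icc 0 ℓ₁, |f x - 1| < 1 / 10)
    (hfb' : ∀ x ∈ Set.Icc 0 ℓ₁, |deriv f x| < 1 / 10)
    (hgb : ∀ x ∈ Set.Icc 0 ℓ₁, |g x| < 1 / 10)
    (hgb' : ∀ x ∈ Set.Icc 0 ℓ₁, |deriv g x - 1| < 1 / 10)
    (a b : ℂ) :
    59 * ℓ₁ / 100 * (‖a‖ ^ 2 + ‖b‖ ^ 2) ≤
      (∫ x in (0:ℝ)..ℓ₁, ‖a * (f x : ℂ) + b * (g x : ℂ)‖ ^ 2) +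
        ∫ x in (0:ℝ)..ℓ₁, ‖deriv (fun t => a * (f t : ℂ) + b * (g t : ℂ)) x‖ ^ 2 := by
  have hfd : Differentiable ℝ f := hf.differentiable one_ne_zero
  have hgd : Differentiable ℝ g := hg.differentiable one_ne_zero
  have hD : ∀ x : ℝ, deriv (fun t => a * (f t : ℂ) + b * (g t : ℂ)) x
      = a * ((deriv f x : ℝ) : ℂ) + b * ((deriv g x : ℝ) : ℂ) := by
    intro x
    have h1 : HasDerivAt (fun t => a * (f t : ℂ) + b * (g t : ℂ))
        (a * ((deriv f x : ℝ) : ℂ) + b * ((deriv g x : ℝ) : ℂ)) x :=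
      (((hfd x).hasDerivAt.ofReal_comp).const_mul a).add
        (((hgd x).hasDerivAt.ofReal_comp).const_mul b)
    exact h1.deriv
  have hfc : Continuous f := hf.continuous
  have hgc : Continuous g := hg.continuous
  have hfc' : Continuous (deriv f) := hf.continuous_deriv le_rfl
  have hgc' : Continuous (deriv g) := hg.continuous_deriv le_rfl
  have hc1 : Continuous (fun x => ‖a * (f x : ℂ) + b * (g x : ℂ)‖ ^ 2) := by
    fun_prop
  have hc2 : Continuous (fun x => ‖a * ((deriv f x : ℝ) : ℂ) + b * ((deriv g x : ℝ) : ℂ)‖ ^ 2) := by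
    fun_prop
  have hi1 : IntervalIntegrable (fun x => ‖a * (f x : ℂ) + b * (g x : ℂ)‖ ^ 2)
      MeasureTheory.volume 0 ℓ₁ := hc1.intervalIntegrable 0 ℓ₁
  have hi2 : IntervalIntegrable (fun x => ‖deriv (fun t => a * (f t : ℂ) + b * (g t : ℂ)) x‖ ^ 2)
      MeasureTheory.volume 0 ℓ₁ := by
    have : (fun x => ‖deriv (fun t => a * (f t : ℂ) + b * (g t : ℂ)) x‖ ^ 2)
        = (fun x => ‖a * ((deriv f x : ℝ) : ℂ) + b * ((deriv g x : ℝ) : ℂ)‖ ^ 2) := by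
      funext x; rw [hD x]
    rw [this]
    exact hc2.intervalIntegrable 0 ℓ₁
  rw [← intervalIntegral.integral_add hi1 hi2]
  have hconst : 59 * ℓ₁ / 100 * (‖a‖ ^ 2 + ‖b‖ ^ 2)
      = ∫ _ in (0:ℝ)..ℓ₁, (59/100 * (‖a‖ ^ 2 + ‖b‖ ^ 2)) := by
    rw [intervalIntegral.integral_const]
    simp [smul_eq_mul]; ring
  rw [hconst]
  apply intervalIntegral.integral_mono_on hℓ.le (intervalIntegrable_const) (hi1.add hi2)
  intro x hx
  rw [hD x]
  exact key_cplx a b (f x) (g x) (deriv f x) (deriv g x)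
    (le_of_lt (hfb x hx)) (le_of_lt (hgb x hx)) (le_of_lt (hfb' x hx)) (le_of_lt (hgb' x hx))
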